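/- arXiv:1006.4283 — 2 statements merged into one kernel-verified Lean document; each statement's English description precedes it below -/
import Mathlib

section
/- Let X(t) be standard one-dimensional Brownian motion, O = (-∞,1), 0 < α < 1/2, G(x) = min(e^x, e), H = f = 0, and w(x) = sup_τ E^x[1_{τ<τ_O} e^{-ατ} G(X(τ))]. Then: (1) for x < 1 and t ≥ 0, E^x[e^{-αt} 1_{X(t)<1} e^{X(t)}] = e^{(1/2-α)t + x} Φ((1-x-t)/√t), where Φ is the standard normal cdf; (2) w(x) ≥ e^{(1/2-α)t + x} Φ((1-x-t)/√t) for all t ≥ 0 and x < 1; (3) w(x) > G(x) = e^x for all x < 1. -/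
open MeasureTheory Set Filter Topology ENNReal

noncomputable section

/-- A (Markov) process: a family of laws `P x` on a path space `Ω` together with
the coordinate process `X`. -/
structure MarkovProcess (E : Type) [MeasurableSpace E]
    (Ω : Type) [MeasurableSpace Ω] where
  P : E → Measure Ω
  isProb : ∀ x, IsProbabilityMeasure (P x)
  X : ℝ → Ω → E
  meas_X : ∀ t : ℝ, Measurable (X t)
  start : ∀ x : E, ∀ᵐ ω ∂ P x, X 0 ω = x

namespace MarkovProcess

variable {E : Type} [MeasurableSpace E] {Ω : Type} [MeasurableSpace Ω]

/-- First exit time from `O` (with value `∞` if the process never leaves `O`). -/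
def exitTime (M : MarkovProcess E Ω) (O : Set E) (ω : Ω) : ℝ≥0∞ :=
  sInf ((fun u : ℝ => ENNReal.ofReal u) '' {u : ℝ | 0 ≤ u ∧ M.X u ω ∉ O})

/-- The natural filtration of the process. -/
def natFiltration (M : MarkovProcess E Ω) : Filtration ℝ (inferInstance : MeasurableSpace Ω) where
  seq t := ⨆ s ∈ Set.Iic t, MeasurableSpace.comap (M.X s) inferInstance
  mono' := by
    intro i j hij
    exact iSup₂_le fun s hs => le_iSup₂_of_le s (hs.trans hij) le_rfl
  le' := by
    intro t
    exact iSup₂_le fun s _ => (M.meas_X s).comap_le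

/-- Stopping times (with values in `ℝ≥0∞`) w.r.t. the natural filtration. -/
def IsStopTime (M : MarkovProcess E Ω) (τ : Ω → ℝ≥0∞) : Prop :=
  ∀ t : ℝ, MeasurableSet[M.natFiltration t] {ω | τ ω ≤ ENNReal.ofReal t}

/-- `∫_0^T e^{-α u} g(s+u, X(u)) du` along the path `ω` (`T` may be `∞`). -/
def runIntegral (M : MarkovProcess E Ω) (α : ℝ) (g : ℝ → E → ℝ) (s : ℝ)
    (T : ℝ≥0∞) (ω : Ω) : ℝ :=
  ∫ u in {u : ℝ | 0 ≤ u ∧ ENNReal.ofReal u < T}, Real.exp (-α * u) * g (s + u) (M.X u ω)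

/-- Discounted payoff `e^{-α T} h(s+T, X(T))`, read as `0` when `T = ∞`. -/
def payoffAt (M : MarkovProcess E Ω) (α : ℝ) (h : ℝ → E → ℝ) (s : ℝ)
    (T : ℝ≥0∞) (ω : Ω) : ℝ :=
  if T ≠ ∞ then Real.exp (-α * T.toReal) * h (s + T.toReal) (M.X T.toReal ω) else 0

/-- The payoff functional
`J(s,x,τ) = E^x[∫_0^{τ∧τ_O} e^{-αu} f(s+u,X(u)) du + 1_{τ<τ_O} e^{-ατ} G(s+τ,X(τ))
  + 1_{τ≥τ_O} e^{-ατ_O} H(s+τ_O,X(τ_O))]`. -/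
def J (M : MarkovProcess E Ω) (O : Set E) (α : ℝ) (f G H : ℝ → E → ℝ)
    (s : ℝ) (x : E) (τ : Ω → ℝ≥0∞) : ℝ :=
  ∫ ω,
    (M.runIntegral α f s (min (τ ω) (M.exitTime O ω)) ω
      + Set.indicator {ω | τ ω < M.exitTime O ω}
          (fun ω => M.payoffAt α G s (τ ω) ω) ω
      + Set.indicator {ω | M.exitTime O ω ≤ τ ω}
          (fun ω => M.payoffAt α H s (M.exitTime O ω) ω) ω) ∂ M.P x

/-- The value function `w(s,x) = sup_τ J(s,x,τ)`, supremum over all stopping times. -/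
def value (M : MarkovProcess E Ω) (O : Set E) (α : ℝ) (f G H : ℝ → E → ℝ)
    (s : ℝ) (x : E) : ℝ :=
  ⨆ τ : {τ : Ω → ℝ≥0∞ // M.IsStopTime τ}, M.J O α f G H s x τ.1

/-- The penalized equation (for `s` in `[0,∞)`):
`w(s,x) = E^x[∫_0^{τ_O} e^{-αu}(f + β (G - w)^+)(s+u,X(u))du + e^{-ατ_O} H(s+τ_O,X(τ_O))]`. -/
def PenEq (M : MarkovProcess E Ω) (O : Set E) (α β : ℝ) (f G H : ℝ → E → ℝ)
    (w : ℝ → E → ℝ) : Prop :=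
  ∀ s : ℝ, 0 ≤ s → ∀ x : E,
    w s x = ∫ ω,
      (M.runIntegral α (fun u y => f u y + β * max (G u y - w u y) 0) s
          (M.exitTime O ω) ω
        + M.payoffAt α H s (M.exitTime O ω) ω) ∂ M.P x


/-- `∫_0^T e^{-αu - ∫_0^u b(t)dt} (g(s+u,X(u)) + b(u) z(s+u,X(u))) du` along the path `ω`. -/
def runIntegralB (M : MarkovProcess E Ω) (α : ℝ) (b : ℝ → Ω → ℝ) (g z : ℝ → E → ℝ)
    (s : ℝ) (T : ℝ≥0∞) (ω : Ω) : ℝ :=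
  ∫ u in {u : ℝ | 0 ≤ u ∧ ENNReal.ofReal u < T},
    Real.exp (-α * u - ∫ t in Set.Ioc (0 : ℝ) u, b t ω) *
      (g (s + u) (M.X u ω) + b u ω * z (s + u) (M.X u ω))

/-- Discounted payoff `e^{-αT - ∫_0^T b(t)dt} h(s+T, X(T))`, read as `0` when `T = ∞`. -/
def payoffAtB (M : MarkovProcess E Ω) (α : ℝ) (b : ℝ → Ω → ℝ) (h : ℝ → E → ℝ)
    (s : ℝ) (T : ℝ≥0∞) (ω : Ω) : ℝ :=
  if T ≠ ∞ then
    Real.exp (-α * T.toReal - ∫ t in Set.Ioc (0 : ℝ) T.toReal, b t ω) *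
      h (s + T.toReal) (M.X T.toReal ω)
  else 0

/-- Boundedness (on `[0,∞) × E`) of a payoff function. -/
def Bdd (g : ℝ → E → ℝ) : Prop := ∃ C : ℝ, ∀ s x, 0 ≤ s → |g s x| ≤ C

/-- The (weak, semigroup form of the) Markov property. -/
def IsMarkov (M : MarkovProcess E Ω) : Prop :=
  ∀ h : E → ℝ, Measurable h → (∃ C, ∀ x, |h x| ≤ C) →
    ∀ (x : E) (s t : ℝ), 0 ≤ s → 0 ≤ t →
      ∫ ω, h (M.X (s + t) ω) ∂ M.P x
        = ∫ ω, (∫ ω', h (M.X t ω') ∂ M.P (M.X s ω)) ∂ M.P x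

/-- Assumption (A1): the stopped semigroup `P_t^{τ_O} h(x) = E^x[1_{t<τ_O} h(X(t))]`
maps continuous bounded functions to continuous (bounded) functions. -/
def A1 [TopologicalSpace E] (M : MarkovProcess E Ω) (O : Set E) : Prop :=
  ∀ t : ℝ, 0 < t → ∀ h : E → ℝ, Continuous h → (∃ C, ∀ x, |h x| ≤ C) →
    Continuous fun x =>
      ∫ ω, Set.indicator {ω | ENNReal.ofReal t < M.exitTime O ω}
        (fun ω => h (M.X t ω)) ω ∂ M.P x

/-- The weak Feller property: the semigroup preserves `C₀(E)`. -/
def WeakFeller [TopologicalSpace E] (M : MarkovProcess E Ω) : Prop :=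
  ∀ t : ℝ, 0 ≤ t → ∀ h : E → ℝ, Continuous h → Tendsto h (cocompact E) (𝓝 0) →
    Continuous (fun x => ∫ ω, h (M.X t ω) ∂ M.P x) ∧
      Tendsto (fun x => ∫ ω, h (M.X t ω) ∂ M.P x) (cocompact E) (𝓝 0)

/-- The strong Feller property (A3). -/
def StrongFeller [TopologicalSpace E] (M : MarkovProcess E Ω) : Prop :=
  ∀ t : ℝ, 0 < t → ∀ h : E → ℝ, Measurable h → (∃ C, ∀ x, |h x| ≤ C) →
    Continuous fun x => ∫ ω, h (M.X t ω) ∂ M.P x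


section StoppingAux

variable {Ω : Type} [MeasurableSpace Ω] {M : MarkovProcess ℝ Ω}

/-- The set of times at which the path is `≥ c`. -/
def hitTimes (M : MarkovProcess ℝ Ω) (c : ℝ) (ω : Ω) : Set ℝ :=
  {u : ℝ | 0 ≤ u ∧ c ≤ M.X u ω}

lemma exit_Iio_def (c : ℝ) (ω : Ω) :
    M.exitTime (Iio c) ω = sInf (ENNReal.ofReal '' hitTimes M c ω) := by
  have h : {u : ℝ | 0 ≤ u ∧ M.X u ω ∉ Iio c} = hitTimes M c ω := by
    ext u; simp [hitTimes, not_lt]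
  rw [exitTime, h]

lemma hitTimes_bddBelow (c : ℝ) (ω : Ω) : BddBelow (hitTimes M c ω) :=
  ⟨0, fun u hu => hu.1⟩

lemma exit_eq_top {c : ℝ} {ω : Ω} (h : hitTimes M c ω = ∅) :
    M.exitTime (Iio c) ω = ∞ := by
  rw [exit_Iio_def, h, Set.image_empty, sInf_empty]

lemma exit_eq_ofReal {c : ℝ} {ω : Ω} (hne : (hitTimes M c ω).Nonempty) :
    M.exitTime (Iio c) ω = ENNReal.ofReal (sInf (hitTimes M c ω)) := by
  rw [exit_Iio_def]
  exact (Monotone.map_csInf_of_continuousAt (ENNReal.continuous_ofReal.continuousAt)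
    (fun a b h => ENNReal.ofReal_le_ofReal h) hne (hitTimes_bddBelow c ω)).symm

lemma hitTimes_closed {c : ℝ} {ω : Ω} (hc : Continuous fun u => M.X u ω) :
    IsClosed (hitTimes M c ω) := by
  have h : hitTimes M c ω = {u : ℝ | 0 ≤ u} ∩ {u : ℝ | c ≤ M.X u ω} := rfl
  rw [h]
  exact (isClosed_le continuous_const continuous_id).inter (isClosed_le continuous_const hc)

lemma sInf_mem_hitTimes {c : ℝ} {ω : Ω} (hc : Continuous fun u => M.X u ω)
    (hne : (hitTimes M c ω).Nonempty) : sInf (hitTimes M c ω) ∈ hitTimes M c ω :=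
  (hitTimes_closed hc).csInf_mem hne (hitTimes_bddBelow c ω)

lemma sInf_hitTimes_pos {c : ℝ} {ω : Ω} (hc : Continuous fun u => M.X u ω)
    (hne : (hitTimes M c ω).Nonempty) (h0 : M.X 0 ω < c) : 0 < sInf (hitTimes M c ω) := by
  obtain ⟨hnn, hge⟩ := sInf_mem_hitTimes hc hne
  rcases lt_or_eq_of_le hnn with h | h
  · exact h
  · exfalso; rw [← h] at hge; exact absurd hge (not_le.2 h0)

lemma X_sInf_hitTimes_eq {c : ℝ} {ω : Ω} (hc : Continuous fun u => M.X u ω)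
    (hne : (hitTimes M c ω).Nonempty) (h0 : M.X 0 ω < c) :
    M.X (sInf (hitTimes M c ω)) ω = c := by
  obtain ⟨hnn, hge⟩ := sInf_mem_hitTimes hc hne
  refine le_antisymm ?_ hge
  have hrpos : 0 < sInf (hitTimes M c ω) := sInf_hitTimes_pos hc hne h0
  have htend : Tendsto (fun u => M.X u ω)
      (𝓝[<] (sInf (hitTimes M c ω))) (𝓝 (M.X (sInf (hitTimes M c ω)) ω)) :=
    (hc.tendsto _).mono_left nhdsWithin_le_nhds
  refine le_of_tendsto htend ?_
  filter_upwards [Ioo_mem_nhdsLT_of_mem ⟨hrpos, le_refl _⟩] with u hu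
  by_contra hlt
  push_neg at hlt
  have humem : u ∈ hitTimes M c ω := ⟨hu.1.le, hlt.le⟩
  exact absurd (csInf_le (hitTimes_bddBelow c ω) humem) (not_le.2 hu.2)

lemma exit_le_ofReal_iff {c : ℝ} {ω : Ω} {t : ℝ} (hc : Continuous fun u => M.X u ω)
    (ht : 0 ≤ t) :
    M.exitTime (Iio c) ω ≤ ENNReal.ofReal t ↔ ∃ u, 0 ≤ u ∧ u ≤ t ∧ c ≤ M.X u ω := by
  constructor
  · intro h
    rcases Set.eq_empty_or_nonempty (hitTimes M c ω) with he | hne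
    · rw [exit_eq_top he] at h
      exact absurd h (by simp)
    · rw [exit_eq_ofReal hne] at h
      have h2 : sInf (hitTimes M c ω) ≤ t := (ENNReal.ofReal_le_ofReal_iff ht).1 h
      obtain ⟨hnn, hge⟩ := sInf_mem_hitTimes hc hne
      exact ⟨sInf (hitTimes M c ω), hnn, h2, hge⟩
  · rintro ⟨u, hu0, hut, hcu⟩
    rw [exit_Iio_def]
    refine le_trans (sInf_le ⟨u, ⟨hu0, hcu⟩, rfl⟩) (ENNReal.ofReal_le_ofReal hut)

end StoppingAux
section StoppingAux2

variable {Ω : Type} [MeasurableSpace Ω] {M : MarkovProcess ℝ Ω}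

lemma exit_le_set_eq (hpath : ∀ ω : Ω, Continuous fun u => M.X u ω) (c : ℝ) {t : ℝ}
    (ht : 0 ≤ t) :
    {ω : Ω | M.exitTime (Iio c) ω ≤ ENNReal.ofReal t}
      = ⋂ (m : ℕ), ⋃ (q : ℚ), {ω : Ω |
          ((0:ℝ) ≤ (q:ℝ) ∧ (q:ℝ) ≤ t) ∧ c - 1/(m+1) < M.X (q:ℝ) ω} := by
  ext ω
  simp only [Set.mem_setOf_eq, Set.mem_iInter, Set.mem_iUnion]
  rw [exit_le_ofReal_iff (hpath ω) ht]
  constructor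
  · rintro ⟨u, hu0, hut, hcu⟩ m
    have hcont : ContinuousAt (fun v => M.X v ω) u := (hpath ω).continuousAt
    have hpos : (0:ℝ) < 1/(m+1) := by positivity
    obtain ⟨δ, hδpos, hδ⟩ := Metric.continuousAt_iff.1 hcont (1/(m+1)) hpos
    rcases eq_or_lt_of_le hu0 with h0 | h0
    · refine ⟨0, ⟨by norm_num, by simpa using ht⟩, ?_⟩
      have : M.X ((0:ℚ):ℝ) ω = M.X u ω := by rw [← h0]; norm_num
      rw [this]
      linarith
    · obtain ⟨q, hq1, hq2⟩ := exists_rat_btwn (sub_lt_self u (lt_min hδpos h0))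
      have hmr := min_le_right δ u
      have hml := min_le_left δ u
      have hq0 : (0:ℝ) ≤ q := by linarith
      have hqt : (q:ℝ) ≤ t := by linarith
      refine ⟨q, ⟨hq0, hqt⟩, ?_⟩
      have hdist : dist (q:ℝ) u < δ := by
        rw [Real.dist_eq, abs_lt]
        constructor <;> linarith
      have := hδ hdist
      rw [Real.dist_eq, abs_lt] at this
      linarith
  · intro h
    choose q hq hx using h
    have hmem : ∀ m : ℕ, (q m : ℝ) ∈ Icc (0:ℝ) t := fun m => ⟨(hq m).1, (hq m).2⟩
    obtain ⟨u, hu, φ, hφ, hlim⟩ := (isCompact_Icc (a := (0:ℝ)) (b := t)).tendsto_subseq hmem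
    have hXlim : Tendsto (fun m => M.X ((q (φ m)):ℝ) ω) atTop (𝓝 (M.X u ω)) :=
      ((hpath ω).tendsto u).comp hlim
    have hlow : Tendsto (fun m : ℕ => c - 1/((φ m : ℝ)+1)) atTop (𝓝 (c - 0)) := by
      refine Tendsto.const_sub c ?_
      have h1 : Tendsto (fun m : ℕ => 1/((m:ℝ)+1)) atTop (𝓝 0) :=
        tendsto_one_div_add_atTop_nhds_zero_nat
      exact h1.comp (StrictMono.tendsto_atTop hφ)
    have hle : c - 0 ≤ M.X u ω := by
      refine le_of_tendsto_of_tendsto hlow hXlim ?_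
      filter_upwards with m
      exact (hx (φ m)).le
    exact ⟨u, hu.1, hu.2, by linarith⟩

lemma measurableSet_exit_le (hpath : ∀ ω : Ω, Continuous fun u => M.X u ω) (c : ℝ) {t : ℝ}
    (ht : 0 ≤ t) :
    MeasurableSet[M.natFiltration t] {ω : Ω | M.exitTime (Iio c) ω ≤ ENNReal.ofReal t} := by
  rw [exit_le_set_eq hpath c ht]
  refine MeasurableSet.iInter fun m => MeasurableSet.iUnion fun q => ?_
  by_cases hq : (0:ℝ) ≤ (q:ℝ) ∧ (q:ℝ) ≤ t
  · have hle : MeasurableSpace.comap (M.X (q:ℝ)) inferInstance ≤ M.natFiltration t :=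
      le_iSup₂ (f := fun (s : ℝ) (_ : s ∈ Iic t) =>
        MeasurableSpace.comap (M.X s) inferInstance) (q:ℝ) hq.2
    refine hle _ ?_
    have hset : {ω : Ω | ((0:ℝ) ≤ (q:ℝ) ∧ (q:ℝ) ≤ t) ∧ c - 1/(m+1) < M.X (q:ℝ) ω}
        = M.X (q:ℝ) ⁻¹' (Ioi (c - 1/(m+1))) := by
      ext ω; simp [hq]
    rw [hset]
    exact ⟨Ioi _, measurableSet_Ioi, rfl⟩
  · have hset : {ω : Ω | ((0:ℝ) ≤ (q:ℝ) ∧ (q:ℝ) ≤ t) ∧ c - 1/(m+1) < M.X (q:ℝ) ω} = ∅ := by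
      ext ω; simp only [Set.mem_setOf_eq, Set.mem_empty_iff_false, iff_false]
      rintro ⟨h1, _⟩; exact hq h1
    rw [hset]
    exact @MeasurableSet.empty _ (M.natFiltration t)

lemma measurableSet_exit_le' (hpath : ∀ ω : Ω, Continuous fun u => M.X u ω) (c : ℝ) {t : ℝ}
    (ht : 0 ≤ t) :
    MeasurableSet {ω : Ω | M.exitTime (Iio c) ω ≤ ENNReal.ofReal t} :=
  (M.natFiltration.le t) _ (measurableSet_exit_le hpath c ht)

lemma measurable_exit (hpath : ∀ ω : Ω, Continuous fun u => M.X u ω) (c : ℝ) :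
    Measurable (M.exitTime (Iio c)) := by
  refine measurable_of_Iic fun a => ?_
  rcases eq_or_ne a ∞ with rfl | ha
  · simp
  · have h : M.exitTime (Iio c) ⁻¹' (Iic a)
        = {ω : Ω | M.exitTime (Iio c) ω ≤ ENNReal.ofReal a.toReal} := by
      ext ω
      simp only [Set.mem_preimage, Set.mem_Iic, Set.mem_setOf_eq]
      rw [ENNReal.ofReal_toReal ha]
    rw [h]
    exact measurableSet_exit_le' hpath c ENNReal.toReal_nonneg

/-- The stopping times used in the proof: `max (min (τ_c, t0), ε)`. -/
lemma isStopTime_aux (hpath : ∀ ω : Ω, Continuous fun u => M.X u ω) (c : ℝ) {t0 ε : ℝ}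
    (hε : 0 < ε) (hεt : ε ≤ t0) :
    M.IsStopTime (fun ω =>
      max (min (M.exitTime (Iio c) ω) (ENNReal.ofReal t0)) (ENNReal.ofReal ε)) := by
  intro t
  rcases lt_or_ge t ε with htε | htε
  · have hset : {ω : Ω | max (min (M.exitTime (Iio c) ω) (ENNReal.ofReal t0))
        (ENNReal.ofReal ε) ≤ ENNReal.ofReal t} = ∅ := by
      ext ω
      simp only [Set.mem_setOf_eq, Set.mem_empty_iff_false, iff_false, max_le_iff, not_and]
      intro _
      rw [not_le]
      exact (ENNReal.ofReal_lt_ofReal_iff hε).2 htε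
    rw [hset]
    exact @MeasurableSet.empty _ (M.natFiltration t)
  · have ht0 : (0:ℝ) ≤ t := le_trans hε.le htε
    have hset : {ω : Ω | max (min (M.exitTime (Iio c) ω) (ENNReal.ofReal t0))
        (ENNReal.ofReal ε) ≤ ENNReal.ofReal t}
        = {ω : Ω | M.exitTime (Iio c) ω ≤ ENNReal.ofReal t}
          ∪ {ω : Ω | ENNReal.ofReal t0 ≤ ENNReal.ofReal t} := by
      ext ω
      simp only [Set.mem_setOf_eq, Set.mem_union, max_le_iff, min_le_iff]
      constructor
      · rintro ⟨h1, _⟩; exact h1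
      · intro h1; exact ⟨h1, ENNReal.ofReal_le_ofReal htε⟩
    rw [hset]
    by_cases h0t : ENNReal.ofReal t0 ≤ ENNReal.ofReal t
    · have : {ω : Ω | ENNReal.ofReal t0 ≤ ENNReal.ofReal t} = Set.univ := by
        ext ω; simp [h0t]
      rw [this, Set.union_univ]
      exact @MeasurableSet.univ _ (M.natFiltration t)
    · have : {ω : Ω | ENNReal.ofReal t0 ≤ ENNReal.ofReal t} = ∅ := by
        ext ω; simp [h0t]
      rw [this, Set.union_empty]
      exact measurableSet_exit_le hpath c ht0

end StoppingAux2
section JAux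

variable {Ω : Type} [MeasurableSpace Ω] {M : MarkovProcess ℝ Ω}

lemma runIntegral_zero (α : ℝ) (T : ℝ≥0∞) (ω : Ω) :
    M.runIntegral α (fun _ _ => (0:ℝ)) 0 T ω = 0 := by
  unfold runIntegral
  simp

lemma payoffAt_zero (α : ℝ) (T : ℝ≥0∞) (ω : Ω) :
    M.payoffAt α (fun _ _ => (0:ℝ)) 0 T ω = 0 := by
  unfold payoffAt
  simp

lemma J_eq_indicator (O : Set ℝ) (α : ℝ) (G : ℝ → ℝ → ℝ) (x : ℝ) (τ : Ω → ℝ≥0∞) :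
    M.J O α (fun _ _ => 0) G (fun _ _ => 0) 0 x τ
      = ∫ ω, Set.indicator {ω' : Ω | τ ω' < M.exitTime O ω'}
          (fun ω' => M.payoffAt α G 0 (τ ω') ω') ω ∂ M.P x := by
  unfold J
  congr 1
  funext ω
  rw [runIntegral_zero]
  have h2 : (fun ω' : Ω => M.payoffAt α (fun _ _ => (0:ℝ)) 0 (M.exitTime O ω') ω')
      = fun _ => (0:ℝ) := by
    funext ω'
    exact payoffAt_zero α _ ω'
  rw [h2]
  simp

lemma payoffAt_G_eq {α : ℝ} {T : ℝ≥0∞} (hT : T ≠ ∞) (ω : Ω) :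
    M.payoffAt α (fun _ y => min (Real.exp y) (Real.exp 1)) 0 T ω
      = Real.exp (-α * T.toReal) * min (Real.exp (M.X T.toReal ω)) (Real.exp 1) := by
  unfold payoffAt
  rw [if_pos hT]

lemma payoff_indicator_bound {α : ℝ} (hα : 0 ≤ α) (τ : Ω → ℝ≥0∞) (e : Ω → ℝ≥0∞) (ω : Ω) :
    ‖Set.indicator {ω' : Ω | τ ω' < e ω'}
        (fun ω' => M.payoffAt α (fun _ y => min (Real.exp y) (Real.exp 1)) 0 (τ ω') ω') ω‖
      ≤ Real.exp 1 := by
  rw [Real.norm_eq_abs]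
  by_cases hω : ω ∈ {ω' : Ω | τ ω' < e ω'}
  · rw [Set.indicator_of_mem hω]
    by_cases hT : τ ω ≠ ∞
    · rw [payoffAt_G_eq hT]
      have h1 : Real.exp (-α * (τ ω).toReal) ≤ 1 := by
        rw [show (1:ℝ) = Real.exp 0 by simp]
        refine Real.exp_le_exp.2 ?_
        have : (0:ℝ) ≤ α * (τ ω).toReal := mul_nonneg hα ENNReal.toReal_nonneg
        linarith
      have h2 : (0:ℝ) ≤ min (Real.exp (M.X (τ ω).toReal ω)) (Real.exp 1) :=
        le_min (Real.exp_nonneg _) (Real.exp_nonneg _)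
      rw [abs_of_nonneg (mul_nonneg (Real.exp_nonneg _) h2)]
      calc Real.exp (-α * (τ ω).toReal) * min (Real.exp (M.X (τ ω).toReal ω)) (Real.exp 1)
          ≤ 1 * min (Real.exp (M.X (τ ω).toReal ω)) (Real.exp 1) :=
            mul_le_mul_of_nonneg_right h1 h2
        _ ≤ 1 * Real.exp 1 := mul_le_mul_of_nonneg_left (min_le_right _ _) one_pos.le
        _ = Real.exp 1 := one_mul _
    · unfold payoffAt
      rw [if_neg hT]
      simp [Real.exp_nonneg]
  · rw [Set.indicator_of_notMem hω]
    simp [Real.exp_nonneg]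

lemma J_le_exp_one {α : ℝ} (hα : 0 ≤ α) (x : ℝ) (τ : Ω → ℝ≥0∞) :
    M.J (Iio 1) α (fun _ _ => 0) (fun _ y => min (Real.exp y) (Real.exp 1))
      (fun _ _ => 0) 0 x τ ≤ Real.exp 1 := by
  haveI := M.isProb x
  rw [J_eq_indicator]
  have h := norm_integral_le_of_norm_le_const (μ := M.P x)
    (f := fun ω => Set.indicator {ω' : Ω | τ ω' < M.exitTime (Iio 1) ω'}
      (fun ω' => M.payoffAt α (fun _ y => min (Real.exp y) (Real.exp 1)) 0 (τ ω') ω') ω)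
    (C := Real.exp 1) (ae_of_all _ (fun ω => payoff_indicator_bound hα τ _ ω))
  rw [probReal_univ, mul_one] at h
  calc _ ≤ ‖∫ ω, Set.indicator {ω' : Ω | τ ω' < M.exitTime (Iio 1) ω'}
        (fun ω' => M.payoffAt α (fun _ y => min (Real.exp y) (Real.exp 1)) 0 (τ ω') ω') ω
          ∂ M.P x‖ := le_abs_self _
    _ ≤ Real.exp 1 := h

lemma measurable_uncurry_X (hpath : ∀ ω : Ω, Continuous fun u => M.X u ω) :
    Measurable (Function.uncurry M.X) :=
  measurable_uncurry_of_continuous_of_measurable hpath M.meas_X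

lemma measurable_X_comp (hpath : ∀ ω : Ω, Continuous fun u => M.X u ω)
    {r : Ω → ℝ} (hr : Measurable r) : Measurable (fun ω => M.X (r ω) ω) :=
  (measurable_uncurry_X hpath).comp (hr.prodMk measurable_id)

end JAux
section Pointwise

variable {Ω : Type} [MeasurableSpace Ω] {M : MarkovProcess ℝ Ω}

/-- The stopping time family used for part (2). -/
def tauF (M : MarkovProcess ℝ Ω) (c : ℝ) (t ε : ℝ) (ω : Ω) : ℝ≥0∞ :=
  max (min (M.exitTime (Iio c) ω) (ENNReal.ofReal t)) (ENNReal.ofReal ε)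

/-- The payoff of the stopping time `tauF`. -/
def payF (M : MarkovProcess ℝ Ω) (α c t ε : ℝ) (ω : Ω) : ℝ :=
  Set.indicator {ω' : Ω | tauF M c t ε ω' < M.exitTime (Iio 1) ω'}
    (fun ω' => Real.exp (-α * (tauF M c t ε ω').toReal)
      * min (Real.exp (M.X (tauF M c t ε ω').toReal ω')) (Real.exp 1)) ω

/-- The limiting payoff. -/
def gLim (M : MarkovProcess ℝ Ω) (α t : ℝ) (ω : Ω) : ℝ :=
  if ENNReal.ofReal t < M.exitTime (Iio 1) ω then
    Real.exp (-α * t) * Real.exp (M.X t ω)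
  else Real.exp (-α * (M.exitTime (Iio 1) ω).toReal) * Real.exp 1

lemma tendsto_payF (hpath : ∀ ω : Ω, Continuous fun u => M.X u ω)
    {x t α : ℝ} (hx : x < 1) (ht : 0 < t)
    {c : ℕ → ℝ} (hcx : ∀ n, x < c n) (hc1 : ∀ n, c n < 1) (hcmono : Monotone c)
    (hclim : Tendsto c atTop (𝓝 1))
    {ε : ℕ → ℝ} (hε : ∀ n, 0 < ε n) (hεt : ∀ n, ε n ≤ t) (hεlim : Tendsto ε atTop (𝓝 0))
    {ω : Ω} (hω : M.X 0 ω = x) :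
    Tendsto (fun n => payF M α (c n) t (ε n) ω) atTop (𝓝 (gLim M α t ω)) := by
  have cont := hpath ω
  by_cases h : ENNReal.ofReal t < M.exitTime (Iio 1) ω
  -- Case A : the path stays below 1 up to time t
  · have hXlt : ∀ u, 0 ≤ u → u ≤ t → M.X u ω < 1 := by
      intro u h0 hut
      by_contra hge
      push_neg at hge
      have : M.exitTime (Iio 1) ω ≤ ENNReal.ofReal t :=
        (exit_le_ofReal_iff cont ht.le).2 ⟨u, h0, hut, hge⟩
      exact absurd h (not_lt.2 this)
    obtain ⟨u0, hu0mem, hu0max⟩ := (isCompact_Icc (a := (0:ℝ)) (b := t)).exists_isMaxOn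
      ⟨0, le_refl _, ht.le⟩ (cont.continuousOn)
    have hMx : M.X u0 ω < 1 := hXlt u0 hu0mem.1 hu0mem.2
    have hev : ∀ᶠ n in atTop, M.X u0 ω < c n := hclim.eventually (lt_mem_nhds hMx)
    have heq : ∀ᶠ n in atTop, payF M α (c n) t (ε n) ω = gLim M α t ω := by
      filter_upwards [hev] with n hn
      have hexit : ENNReal.ofReal t < M.exitTime (Iio (c n)) ω := by
        rw [lt_iff_not_ge]
        intro hle
        obtain ⟨u, h0, hut, hcu⟩ := (exit_le_ofReal_iff cont ht.le).1 hle
        have := hu0max ⟨h0, hut⟩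
        simp only [Set.mem_setOf_eq] at this
        have : M.X u ω ≤ M.X u0 ω := this
        linarith
      have hτ : tauF M (c n) t (ε n) ω = ENNReal.ofReal t := by
        unfold tauF
        rw [min_eq_right hexit.le, max_eq_left (ENNReal.ofReal_le_ofReal (hεt n))]
      have hmem : ω ∈ {ω' : Ω | tauF M (c n) t (ε n) ω' < M.exitTime (Iio 1) ω'} := by
        simp only [Set.mem_setOf_eq, hτ]
        exact h
      unfold payF
      rw [Set.indicator_of_mem hmem, hτ, ENNReal.toReal_ofReal ht.le]
      have hXt : M.X t ω < 1 := hXlt t ht.le (le_refl t)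
      rw [min_eq_left (Real.exp_le_exp.2 hXt.le)]
      unfold gLim
      rw [if_pos h]
    exact tendsto_const_nhds.congr' (heq.mono fun n hn => hn.symm)
  -- Case B : the path exits before time t
  · push_neg at h
    have hne1 : (hitTimes M 1 ω).Nonempty := by
      rcases Set.eq_empty_or_nonempty (hitTimes M 1 ω) with he | hne
      · rw [exit_eq_top he] at h
        exact absurd h (by simp)
      · exact hne
    set r : ℝ := sInf (hitTimes M 1 ω) with hr_def
    have hexit1 : M.exitTime (Iio 1) ω = ENNReal.ofReal r := exit_eq_ofReal hne1
    obtain ⟨hr0, hXr⟩ := sInf_mem_hitTimes cont hne1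
    have hrt : r ≤ t := by
      rw [hexit1] at h
      exact (ENNReal.ofReal_le_ofReal_iff ht.le).1 h
    have hX0 : M.X 0 ω < 1 := by rw [hω]; exact hx
    have hrpos : 0 < r := sInf_hitTimes_pos cont hne1 hX0
    have hsub : ∀ n, hitTimes M 1 ω ⊆ hitTimes M (c n) ω := by
      intro n u hu
      exact ⟨hu.1, le_trans (hc1 n).le hu.2⟩
    have hne : ∀ n, (hitTimes M (c n) ω).Nonempty := fun n => hne1.mono (hsub n)
    set rn : ℕ → ℝ := fun n => sInf (hitTimes M (c n) ω) with hrn_def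
    have hrn_le_r : ∀ n, rn n ≤ r :=
      fun n => csInf_le_csInf (hitTimes_bddBelow _ _) hne1 (hsub n)
    have hrn_mono : Monotone rn := by
      intro m n hmn
      refine csInf_le_csInf (hitTimes_bddBelow _ _) (hne n) ?_
      intro u hu
      exact ⟨hu.1, le_trans (hcmono hmn) hu.2⟩
    have hX0n : ∀ n, M.X 0 ω < c n := fun n => by rw [hω]; exact hcx n
    have hXrn : ∀ n, M.X (rn n) ω = c n := fun n => X_sInf_hitTimes_eq cont (hne n) (hX0n n)
    have hrn_pos : ∀ n, 0 < rn n := fun n => sInf_hitTimes_pos cont (hne n) (hX0n n)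
    have hrn_lt_r : ∀ n, rn n < r := by
      intro n
      refine lt_of_le_of_ne (hrn_le_r n) ?_
      intro hcontra
      have h1 : M.X (rn n) ω = c n := hXrn n
      rw [hcontra] at h1
      rw [h1] at hXr
      exact absurd hXr (not_le.2 (hc1 n))
    have hbdd : BddAbove (Set.range rn) := ⟨r, by rintro _ ⟨n, rfl⟩; exact hrn_le_r n⟩
    have htendL : Tendsto rn atTop (𝓝 (⨆ n, rn n)) := tendsto_atTop_ciSup hrn_mono hbdd
    have hL_le_r : (⨆ n, rn n) ≤ r := ciSup_le hrn_le_r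
    have hXL : M.X (⨆ n, rn n) ω = 1 := by
      have h1 : Tendsto (fun n => M.X (rn n) ω) atTop (𝓝 (M.X (⨆ n, rn n) ω)) :=
        (cont.tendsto _).comp htendL
      have h2 : Tendsto (fun n => M.X (rn n) ω) atTop (𝓝 1) := by
        have : (fun n => M.X (rn n) ω) = c := funext hXrn
        rw [this]
        exact hclim
      exact tendsto_nhds_unique h1 h2
    have hL0 : 0 ≤ (⨆ n, rn n) := le_trans (hrn_pos 0).le (le_ciSup hbdd 0)
    have hLr : (⨆ n, rn n) = r := by
      refine le_antisymm hL_le_r ?_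
      exact csInf_le (hitTimes_bddBelow _ _) ⟨hL0, hXL.ge⟩
    have htendr : Tendsto rn atTop (𝓝 r) := by rw [← hLr]; exact htendL
    have hevε : ∀ᶠ n in atTop, ε n < rn 0 := hεlim.eventually (gt_mem_nhds (hrn_pos 0))
    have heq : ∀ᶠ n in atTop,
        payF M α (c n) t (ε n) ω = Real.exp (-α * rn n) * Real.exp (c n) := by
      filter_upwards [hevε] with n hn
      have hεrn : ε n ≤ rn n := le_trans hn.le (hrn_mono (Nat.zero_le n))
      have hexitn : M.exitTime (Iio (c n)) ω = ENNReal.ofReal (rn n) := exit_eq_ofReal (hne n)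
      have hτ : tauF M (c n) t (ε n) ω = ENNReal.ofReal (rn n) := by
        unfold tauF
        rw [hexitn, min_eq_left (ENNReal.ofReal_le_ofReal (le_trans (hrn_le_r n) hrt)),
          max_eq_left (ENNReal.ofReal_le_ofReal hεrn)]
      have hmem : ω ∈ {ω' : Ω | tauF M (c n) t (ε n) ω' < M.exitTime (Iio 1) ω'} := by
        simp only [Set.mem_setOf_eq, hτ, hexit1]
        exact (ENNReal.ofReal_lt_ofReal_iff hrpos).2 (hrn_lt_r n)
      unfold payF
      rw [Set.indicator_of_mem hmem, hτ, ENNReal.toReal_ofReal (hrn_pos n).le, hXrn n,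
        min_eq_left (Real.exp_le_exp.2 (hc1 n).le)]
    have hglim : gLim M α t ω = Real.exp (-α * r) * Real.exp 1 := by
      unfold gLim
      rw [if_neg (not_lt.2 h), hexit1, ENNReal.toReal_ofReal hrpos.le]
    rw [hglim]
    have htprod : Tendsto (fun n => Real.exp (-α * rn n) * Real.exp (c n)) atTop
        (𝓝 (Real.exp (-α * r) * Real.exp 1)) := by
      refine Tendsto.mul ?_ ?_
      · exact (Real.continuous_exp.tendsto _).comp (htendr.const_mul (-α))
      · exact (Real.continuous_exp.tendsto _).comp hclim
    exact htprod.congr' (heq.mono fun n hn => hn.symm)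

end Pointwise
section Meas

variable {Ω : Type} [MeasurableSpace Ω] {M : MarkovProcess ℝ Ω}

lemma measurable_tauF (hpath : ∀ ω : Ω, Continuous fun u => M.X u ω) (c t ε : ℝ) :
    Measurable (tauF M c t ε) :=
  ((measurable_exit hpath c).min measurable_const).max measurable_const

lemma tauF_ne_top (c t ε : ℝ) (ω : Ω) : tauF M c t ε ω ≠ ∞ := by
  unfold tauF
  rw [← lt_top_iff_ne_top]
  exact max_lt (lt_of_le_of_lt (min_le_right _ _) ENNReal.ofReal_lt_top) ENNReal.ofReal_lt_top

lemma measurable_payF (hpath : ∀ ω : Ω, Continuous fun u => M.X u ω) (α c t ε : ℝ) :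
    Measurable (payF M α c t ε) := by
  have hτ := measurable_tauF (M := M) hpath c t ε
  have hr : Measurable (fun ω => (tauF M c t ε ω).toReal) :=
    ENNReal.measurable_toReal.comp hτ
  have hX : Measurable (fun ω => M.X ((tauF M c t ε ω).toReal) ω) :=
    measurable_X_comp hpath hr
  have hbody : Measurable (fun ω => Real.exp (-α * (tauF M c t ε ω).toReal)
      * min (Real.exp (M.X ((tauF M c t ε ω).toReal) ω)) (Real.exp 1)) := by
    refine Measurable.mul ?_ ?_
    · exact Real.measurable_exp.comp (hr.const_mul (-α))
    · exact (Real.measurable_exp.comp hX).min measurable_const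
  exact hbody.indicator (measurableSet_lt hτ (measurable_exit hpath 1))

lemma measurable_gLim (hpath : ∀ ω : Ω, Continuous fun u => M.X u ω) (α t : ℝ) :
    Measurable (gLim M α t) := by
  unfold gLim
  refine Measurable.ite (measurableSet_lt measurable_const (measurable_exit hpath 1)) ?_ ?_
  · exact measurable_const.mul (Real.measurable_exp.comp (M.meas_X t))
  · exact (Real.measurable_exp.comp
      ((ENNReal.measurable_toReal.comp (measurable_exit hpath 1)).const_mul (-α))).mul
      measurable_const

lemma payF_bound {α : ℝ} (hα : 0 ≤ α) (c t ε : ℝ) (ω : Ω) :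
    ‖payF M α c t ε ω‖ ≤ Real.exp 1 := by
  unfold payF
  rw [Real.norm_eq_abs]
  by_cases hω : ω ∈ {ω' : Ω | tauF M c t ε ω' < M.exitTime (Iio 1) ω'}
  · rw [Set.indicator_of_mem hω]
    have h1 : Real.exp (-α * (tauF M c t ε ω).toReal) ≤ 1 := by
      rw [show (1:ℝ) = Real.exp 0 by simp]
      refine Real.exp_le_exp.2 ?_
      have : (0:ℝ) ≤ α * (tauF M c t ε ω).toReal := mul_nonneg hα ENNReal.toReal_nonneg
      linarith
    have h2 : (0:ℝ) ≤ min (Real.exp (M.X ((tauF M c t ε ω).toReal) ω)) (Real.exp 1) :=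
      le_min (Real.exp_nonneg _) (Real.exp_nonneg _)
    rw [abs_of_nonneg (mul_nonneg (Real.exp_nonneg _) h2)]
    calc _ ≤ 1 * min (Real.exp (M.X ((tauF M c t ε ω).toReal) ω)) (Real.exp 1) :=
          mul_le_mul_of_nonneg_right h1 h2
      _ ≤ 1 * Real.exp 1 := mul_le_mul_of_nonneg_left (min_le_right _ _) one_pos.le
      _ = Real.exp 1 := one_mul _
  · rw [Set.indicator_of_notMem hω]
    simp [Real.exp_nonneg]

lemma X_t_lt_one {t : ℝ} (ht : 0 ≤ t) {ω : Ω}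
    (h : ENNReal.ofReal t < M.exitTime (Iio 1) ω) : M.X t ω < 1 := by
  by_contra hge
  push_neg at hge
  have : M.exitTime (Iio 1) ω ≤ ENNReal.ofReal t := by
    rw [exit_Iio_def]
    exact sInf_le ⟨t, ⟨ht, hge⟩, rfl⟩
  exact absurd h (not_lt.2 this)

lemma gLim_bound {α : ℝ} (hα : 0 ≤ α) {t : ℝ} (ht : 0 < t) (ω : Ω) :
    ‖gLim M α t ω‖ ≤ Real.exp 1 := by
  unfold gLim
  rw [Real.norm_eq_abs]
  have hexp1 : ∀ s : ℝ, 0 ≤ s → Real.exp (-α * s) ≤ 1 := by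
    intro s hs
    rw [show (1:ℝ) = Real.exp 0 by simp]
    refine Real.exp_le_exp.2 ?_
    have : (0:ℝ) ≤ α * s := mul_nonneg hα hs
    linarith
  split_ifs with h
  · have hXt : M.X t ω < 1 := X_t_lt_one ht.le h
    rw [abs_of_nonneg (mul_nonneg (Real.exp_nonneg _) (Real.exp_nonneg _))]
    calc Real.exp (-α * t) * Real.exp (M.X t ω) ≤ 1 * Real.exp 1 :=
          mul_le_mul (hexp1 t ht.le) (Real.exp_le_exp.2 hXt.le) (Real.exp_nonneg _) one_pos.le
      _ = Real.exp 1 := one_mul _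
  · rw [abs_of_nonneg (mul_nonneg (Real.exp_nonneg _) (Real.exp_nonneg _))]
    calc _ ≤ 1 * Real.exp 1 :=
          mul_le_mul (hexp1 _ ENNReal.toReal_nonneg) (le_refl _) (Real.exp_nonneg _) one_pos.le
      _ = Real.exp 1 := one_mul _

lemma gLim_ge {α : ℝ} (hα : 0 ≤ α) {t : ℝ} (ht : 0 < t) (ω : Ω) :
    Real.exp (-α * t) * Set.indicator {ω' : Ω | M.X t ω' < 1}
      (fun ω' => Real.exp (M.X t ω')) ω ≤ gLim M α t ω := by
  unfold gLim
  split_ifs with h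
  · have hXt : M.X t ω < 1 := X_t_lt_one ht.le h
    rw [Set.indicator_of_mem (by exact hXt)]
  · by_cases hXt : M.X t ω < 1
    · rw [Set.indicator_of_mem (by exact hXt)]
      push_neg at h
      have het : (M.exitTime (Iio 1) ω).toReal ≤ t := ENNReal.toReal_le_of_le_ofReal ht.le h
      refine mul_le_mul ?_ (Real.exp_le_exp.2 hXt.le) (Real.exp_nonneg _) (Real.exp_nonneg _)
      refine Real.exp_le_exp.2 ?_
      have := mul_le_mul_of_nonneg_left het hα
      linarith
    · rw [Set.indicator_of_notMem (by exact hXt)]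
      rw [mul_zero]
      exact mul_nonneg (Real.exp_nonneg _) (Real.exp_nonneg _)

lemma J_tauF_eq (α : ℝ) (c t ε x : ℝ) :
    M.J (Iio 1) α (fun _ _ => 0) (fun _ y => min (Real.exp y) (Real.exp 1))
        (fun _ _ => 0) 0 x (tauF M c t ε)
      = ∫ ω, payF M α c t ε ω ∂ M.P x := by
  rw [J_eq_indicator]
  congr 1
  funext ω
  unfold payF
  congr 1
  funext ω'
  exact payoffAt_G_eq (tauF_ne_top c t ε ω') ω'

end Meas
section Part2

variable {Ω : Type} [MeasurableSpace Ω] {M : MarkovProcess ℝ Ω}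

lemma value_ge_integral_gLim (hpath : ∀ ω : Ω, Continuous fun u => M.X u ω)
    {α : ℝ} (hα : 0 < α) {x t : ℝ} (hx : x < 1) (ht : 0 < t) :
    ∫ ω, gLim M α t ω ∂ M.P x
      ≤ M.value (Set.Iio 1) α (fun _ _ => 0) (fun _ y => min (Real.exp y) (Real.exp 1))
          (fun _ _ => 0) 0 x := by
  haveI := M.isProb x
  set c : ℕ → ℝ := fun n => 1 - (1 - x)/(n + 2) with hc_def
  set ε : ℕ → ℝ := fun n => t/(n + 1) with hε_def
  have hd : (0:ℝ) < 1 - x := by linarith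
  have hcx : ∀ n, x < c n := by
    intro n
    have h2 : (1 - x)/((n:ℝ) + 2) < 1 - x := by
      rw [div_lt_iff₀ (by positivity)]
      nlinarith [Nat.cast_nonneg (α := ℝ) n]
    simp only [hc_def]
    linarith
  have hc1 : ∀ n, c n < 1 := by
    intro n
    have h2 : (0:ℝ) < (1 - x)/((n:ℝ) + 2) := by positivity
    simp only [hc_def]
    linarith
  have hcmono : Monotone c := by
    intro m n hmn
    simp only [hc_def]
    have h1 : ((m:ℝ) + 2) ≤ ((n:ℝ) + 2) := by
      have := Nat.cast_le (α := ℝ).2 hmn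
      linarith
    have h2 : (1 - x)/((n:ℝ) + 2) ≤ (1 - x)/((m:ℝ) + 2) :=
      div_le_div_of_nonneg_left hd.le (by positivity) h1
    linarith
  have h2 : Tendsto (fun n : ℕ => 1/((n:ℝ)+2)) atTop (𝓝 0) := by
    have h3 := (tendsto_one_div_add_atTop_nhds_zero_nat (𝕜 := ℝ)).comp (tendsto_add_atTop_nat 1)
    refine h3.congr fun n => ?_
    simp only [Function.comp_apply]
    push_cast
    ring
  have hclim : Tendsto c atTop (𝓝 1) := by
    have h5 : Tendsto (fun n : ℕ => 1 - (1-x)*(1/((n:ℝ)+2))) atTop (𝓝 (1 - (1-x)*0)) :=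
      Filter.Tendsto.const_sub 1 (h2.const_mul (1-x))
    simp only [mul_zero, sub_zero] at h5
    have h6 : c = fun n : ℕ => 1 - (1-x)*(1/((n:ℝ)+2)) := by
      funext n; simp only [hc_def]; rw [mul_one_div]
    rwa [h6]
  have hε0 : ∀ n, 0 < ε n := fun n => by positivity
  have hεt : ∀ n, ε n ≤ t := by
    intro n
    simp only [hε_def]
    rw [div_le_iff₀ (by positivity)]
    nlinarith [Nat.cast_nonneg (α := ℝ) n]
  have hεlim : Tendsto ε atTop (𝓝 0) := by
    have h5 : Tendsto (fun n : ℕ => t * (1/((n:ℝ)+1))) atTop (𝓝 (t * 0)) :=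
      tendsto_one_div_add_atTop_nhds_zero_nat.const_mul t
    simp only [mul_zero] at h5
    have h6 : ε = fun n : ℕ => t * (1/((n:ℝ)+1)) := by
      funext n; simp only [hε_def]; rw [mul_one_div]
    rwa [h6]
  have hmeas : ∀ n : ℕ, AEStronglyMeasurable (fun ω => payF M α (c n) t (ε n) ω) (M.P x) :=
    fun n => (measurable_payF hpath α (c n) t (ε n)).aestronglyMeasurable
  have hboundI : Integrable (fun _ : Ω => Real.exp 1) (M.P x) := integrable_const _
  have hbound : ∀ n : ℕ, ∀ᵐ ω ∂ M.P x, ‖payF M α (c n) t (ε n) ω‖ ≤ Real.exp 1 :=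
    fun n => ae_of_all _ (payF_bound hα.le (c n) t (ε n))
  have hlim : ∀ᵐ ω ∂ M.P x, Tendsto (fun n => payF M α (c n) t (ε n) ω) atTop
      (𝓝 (gLim M α t ω)) := by
    filter_upwards [M.start x] with ω hω
    exact tendsto_payF hpath hx ht hcx hc1 hcmono hclim hε0 hεt hεlim hω
  have htend := tendsto_integral_of_dominated_convergence (μ := M.P x)
    (bound := fun _ => Real.exp 1) hmeas hboundI hbound hlim
  refine le_of_tendsto htend ?_
  filter_upwards with n
  rw [← J_tauF_eq]
  have hbdd : BddAbove (Set.range (fun τ : {τ : Ω → ℝ≥0∞ // M.IsStopTime τ} =>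
      M.J (Set.Iio 1) α (fun _ _ => 0) (fun _ y => min (Real.exp y) (Real.exp 1))
        (fun _ _ => 0) 0 x τ.1)) := by
    refine ⟨Real.exp 1, ?_⟩
    rintro _ ⟨τ, rfl⟩
    exact J_le_exp_one hα.le x τ.1
  exact le_ciSup hbdd ⟨tauF M (c n) t (ε n), isStopTime_aux hpath (c n) (hε0 n) (hεt n)⟩

end Part2
section GaussAll
open ProbabilityTheory Real NNReal



lemma toNNReal_ne_zero {t : ℝ} (ht : 0 < t) : t.toNNReal ≠ 0 := by
  simp [Real.toNNReal_eq_zero, not_le, ht]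

lemma gauss_pdf_tilt {m : ℝ} {t : ℝ} (ht : 0 < t) (y : ℝ) :
    gaussianPDFReal m t.toNNReal y * Real.exp y
      = Real.exp (m + t / 2) * gaussianPDFReal (m + t) t.toNNReal y := by
  have hv : ((t.toNNReal : ℝ)) = t := Real.coe_toNNReal t ht.le
  unfold ProbabilityTheory.gaussianPDFReal
  rw [hv]
  have key : rexp (-(y-m)^2/(2*t)) * rexp y = rexp (m+t/2) * rexp (-(y-(m+t))^2/(2*t)) := by
    rw [← Real.exp_add, ← Real.exp_add]
    congr 1
    field_simp
    ring
  linear_combination (√(2*π*t))⁻¹ * key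

lemma gauss_setIntegral_exp {m : ℝ} {t : ℝ} (ht : 0 < t) {s : Set ℝ} (hs : MeasurableSet s) :
    ∫ y in s, Real.exp y ∂(gaussianReal m t.toNNReal)
      = Real.exp (m + t / 2) * ((gaussianReal (m + t) t.toNNReal) s).toReal := by
  have hv := toNNReal_ne_zero ht
  have h1 : (gaussianReal m t.toNNReal).restrict s
      = (volume.restrict s).withDensity (gaussianPDF m t.toNNReal) := by
    rw [gaussianReal_of_var_ne_zero _ hv, restrict_withDensity hs]
  have h2 : (volume.restrict s).withDensity (gaussianPDF m t.toNNReal)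
      = (volume.restrict s).withDensity
          (fun y => ((gaussianPDFReal m t.toNNReal y).toNNReal : ℝ≥0∞)) := rfl
  have h4 := integral_withDensity_eq_integral_smul (μ := volume.restrict s)
    (f := fun y => (gaussianPDFReal m t.toNNReal y).toNNReal)
    (measurable_real_toNNReal.comp (measurable_gaussianPDFReal _ _)) (fun y => Real.exp y)
  rw [h1, h2]
  erw [h4]
  have h3 : ∀ y : ℝ, (gaussianPDFReal m t.toNNReal y).toNNReal • Real.exp y
      = Real.exp (m + t / 2) * gaussianPDFReal (m + t) t.toNNReal y := by
    intro y
    rw [NNReal.smul_def, smul_eq_mul, Real.coe_toNNReal _ (gaussianPDFReal_nonneg _ _ _)]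
    exact gauss_pdf_tilt ht y
  simp_rw [h3]
  rw [integral_const_mul, gaussianReal_apply_eq_integral _ hv,
    ENNReal.toReal_ofReal (setIntegral_nonneg hs (fun y _ => gaussianPDFReal_nonneg _ _ _))]

lemma gauss_Iio_eq_Iic {m : ℝ} {v : ℝ≥0} (hv : v ≠ 0) (a : ℝ) :
    (gaussianReal m v) (Iio a) = (gaussianReal m v) (Iic a) := by
  have hsing : (gaussianReal m v) {a} = 0 :=
    gaussianReal_absolutelyContinuous m hv (Real.volume_singleton)
  refine le_antisymm (measure_mono Iio_subset_Iic_self) ?_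
  calc (gaussianReal m v) (Iic a) = (gaussianReal m v) (Iio a ∪ {a}) := by
        rw [Iio_union_right]
    _ ≤ (gaussianReal m v) (Iio a) + (gaussianReal m v) {a} := measure_union_le _ _
    _ = (gaussianReal m v) (Iio a) := by rw [hsing, add_zero]

lemma gauss_affine {t : ℝ} (ht : 0 < t) (m : ℝ) :
    gaussianReal m t.toNNReal
      = (gaussianReal 0 1).map (fun y => Real.sqrt t * y + m) := by
  have h1 : (gaussianReal 0 1).map (fun y : ℝ => Real.sqrt t * y)
      = gaussianReal 0 t.toNNReal := by
    rw [gaussianReal_map_const_mul]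
    congr 1
    · ring
    · ext
      simp [Real.sq_sqrt ht.le, Real.coe_toNNReal t ht.le]
  have h2 : (fun y : ℝ => Real.sqrt t * y + m)
      = (fun y : ℝ => y + m) ∘ (fun y : ℝ => Real.sqrt t * y) := rfl
  rw [h2, ← Measure.map_map (measurable_id'.add_const m) (measurable_const_mul _), h1,
    gaussianReal_map_add_const]
  rw [zero_add]

lemma gauss_cdf_eq {t : ℝ} (ht : 0 < t) (m a : ℝ) :
    ((gaussianReal m t.toNNReal) (Iic a)).toReal
      = (cdf (gaussianReal 0 1)) ((a - m) / Real.sqrt t) := by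
  have hst : (0:ℝ) < Real.sqrt t := Real.sqrt_pos.2 ht
  rw [gauss_affine ht m, Measure.map_apply (by fun_prop) measurableSet_Iic]
  have hpre : (fun y : ℝ => Real.sqrt t * y + m) ⁻¹' (Iic a)
      = Iic ((a - m) / Real.sqrt t) := by
    ext y
    simp only [mem_preimage, mem_Iic]
    rw [le_div_iff₀ hst]
    constructor <;> intro h <;> nlinarith
  rw [hpre, cdf_eq_real]
  rfl



lemma integral_mul_exp_tail {z : ℝ} (hz : 0 < z) :
    ∫ y in Ioi z, y * rexp (-(y^2/2)) = rexp (-(z^2/2)) := by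
  have hderiv : ∀ y ∈ Ioi z, HasDerivAt (fun y : ℝ => -rexp (-(y^2/2)))
      (y * rexp (-(y^2/2))) y := by
    intro y _
    have h1 : HasDerivAt (fun y : ℝ => -(y^2/2)) (-y) y := by
      have := ((hasDerivAt_pow 2 y).div_const 2).fun_neg
      exact this.congr_deriv (by norm_num)
    have h2 := (h1.exp).fun_neg
    exact h2.congr_deriv (by ring)
  have hint : IntegrableOn (fun y : ℝ => y * rexp (-(y^2/2))) (Ioi z) := by
    have := integrable_mul_exp_neg_mul_sq (b := 1/2) (by norm_num)
    have h : (fun y : ℝ => y * rexp (-(1/2) * y^2)) = fun y : ℝ => y * rexp (-(y^2/2)) := by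
      funext y; ring_nf
    rw [h] at this
    exact this.integrableOn
  have htend : Tendsto (fun y : ℝ => -rexp (-(y^2/2))) atTop (𝓝 0) := by
    rw [show (0:ℝ) = -0 by ring]
    refine Tendsto.neg ?_
    refine Real.tendsto_exp_atBot.comp ?_
    have h1 : Tendsto (fun y : ℝ => y^2/2) atTop atTop :=
      (tendsto_pow_atTop (two_ne_zero)).atTop_div_const (by norm_num)
    exact tendsto_neg_atBot_iff.mpr h1
  have := integral_Ioi_of_hasDerivAt_of_tendsto
    (Continuous.continuousWithinAt (by continuity)) hderiv hint htend
  rw [this]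
  ring

lemma gauss_tail {z : ℝ} (hz : 1 ≤ z) :
    ((gaussianReal 0 1) (Ici z)).toReal ≤ rexp (-(z^2/2)) := by
  have h1 : (1 : ℝ≥0) ≠ 0 := one_ne_zero
  rw [gaussianReal_apply_eq_integral _ h1,
    ENNReal.toReal_ofReal (setIntegral_nonneg measurableSet_Ici
      (fun y _ => gaussianPDFReal_nonneg _ _ _))]
  have hz0 : (0:ℝ) < z := lt_of_lt_of_le one_pos hz
  have hmono : ∫ y in Ici z, gaussianPDFReal 0 1 y ≤ ∫ y in Ici z, y * rexp (-(y^2/2)) := by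
    refine setIntegral_mono_on ((integrable_gaussianPDFReal 0 1).integrableOn) ?_
      measurableSet_Ici ?_
    · have := integrable_mul_exp_neg_mul_sq (b := 1/2) (by norm_num)
      have h : (fun y : ℝ => y * rexp (-(1/2) * y^2)) = fun y : ℝ => y * rexp (-(y^2/2)) := by
        funext y; ring_nf
      rw [h] at this
      exact this.integrableOn
    · intro y hy
      rw [mem_Ici] at hy
      have hy1 : (1:ℝ) ≤ y := le_trans hz hy
      unfold ProbabilityTheory.gaussianPDFReal
      have h2 : ((((1:ℝ≥0)):ℝ)) = (1:ℝ) := rfl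
      rw [h2]
      have harg : -(y - 0)^2/(2*1) = -(y^2/2) := by ring
      rw [harg]
      have hc : (√(2 * π * 1))⁻¹ ≤ 1 := by
        rw [mul_one]
        refine inv_le_one_of_one_le₀ ?_
        rw [show (1:ℝ) = √1 by simp]
        exact Real.sqrt_le_sqrt (by nlinarith [Real.pi_gt_three])
      calc (√(2 * π * 1))⁻¹ * rexp (-(y^2/2)) ≤ 1 * rexp (-(y^2/2)) := by
            exact mul_le_mul_of_nonneg_right hc (Real.exp_nonneg _)
        _ ≤ y * rexp (-(y^2/2)) := mul_le_mul_of_nonneg_right hy1 (Real.exp_nonneg _)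
  calc ∫ y in Ici z, gaussianPDFReal 0 1 y ≤ ∫ y in Ici z, y * rexp (-(y^2/2)) := hmono
    _ = ∫ y in Ioi z, y * rexp (-(y^2/2)) := integral_Ici_eq_integral_Ioi
    _ = rexp (-(z^2/2)) := integral_mul_exp_tail hz0

lemma gauss_cdf_lower {z : ℝ} (hz : 1 ≤ z) :
    1 - rexp (-(z^2/2)) ≤ (cdf (gaussianReal 0 1)) z := by
  have hprob : IsProbabilityMeasure (gaussianReal 0 1) := by infer_instance
  rw [cdf_eq_real, measureReal_def]
  have hIic : (gaussianReal 0 1) (Iic z) = 1 - (gaussianReal 0 1) (Ioi z) := by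
    rw [← Set.compl_Ioi, prob_compl_eq_one_sub measurableSet_Ioi]
  rw [hIic]
  rw [ENNReal.toReal_sub_of_le (prob_le_one) one_ne_top, ENNReal.toReal_one]
  have htail : ((gaussianReal 0 1) (Ioi z)).toReal ≤ rexp (-(z^2/2)) := by
    refine le_trans ?_ (gauss_tail hz)
    exact ENNReal.toReal_mono (measure_ne_top _ _) (measure_mono Ioi_subset_Ici_self)
  linarith

set_option maxHeartbeats 1000000 in
lemma part3_aux' {c d t : ℝ} (hc : 0 < c) (hd : 0 < d) (ht : 0 < t)
    (htd2 : t ≤ d/2) (htd4 : t ≤ d^2/4) (htc : t ≤ 1/c) (htc8 : t ≤ c*d^4/800) :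
    1 < rexp (c * t) * (cdf (gaussianReal 0 1)) ((d - t) / Real.sqrt t) := by
  have hst : (0:ℝ) < Real.sqrt t := Real.sqrt_pos.2 ht
  have hdt : d/2 ≤ d - t := by linarith
  set z : ℝ := (d - t) / Real.sqrt t with hz_def
  have hzpos : 0 < z := div_pos (by linarith) hst
  have hz2 : d^2/(4*t) ≤ z^2 := by
    rw [hz_def, div_pow, Real.sq_sqrt ht.le, div_le_div_iff₀ (by positivity) ht]
    have hh : (d/2)*(d/2) ≤ (d-t)*(d-t) := mul_le_mul hdt hdt (by linarith) (by linarith)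
    have h2 := mul_le_mul_of_nonneg_right hh ht.le
    linarith
  have h41 : (1:ℝ) ≤ d^2/(4*t) := by
    rw [le_div_iff₀ (by positivity)]
    linarith
  have hz1 : 1 ≤ z := by nlinarith [hz2, h41, hzpos, sq_nonneg (z-1)]
  have hexp_ge : (z^2/2)^2/4 ≤ rexp (z^2/2) := by
    have h1 : z^2/2/2 + 1 ≤ rexp (z^2/2/2) := Real.add_one_le_exp _
    have h2 : rexp (z^2/2) = rexp (z^2/2/2) * rexp (z^2/2/2) := by
      rw [← Real.exp_add]; ring_nf
    nlinarith [Real.exp_nonneg (z^2/2/2), sq_nonneg (z^2/2/2)]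
  have hzt : rexp (-(z^2/2)) ≤ 16/z^4 := by
    have h2 : (0:ℝ) < rexp (z^2/2) := Real.exp_pos _
    rw [Real.exp_neg, inv_eq_one_div, div_le_div_iff₀ h2 (by positivity)]
    nlinarith [hexp_ge]
  have hz4 : d^4/(16*t^2) ≤ z^4 := by
    have h0 : (0:ℝ) ≤ d^2/(4*t) := by positivity
    calc d^4/(16*t^2) = (d^2/(4*t))^2 := by field_simp; ring
      _ ≤ (z^2)^2 := by nlinarith [hz2]
      _ = z^4 := by ring
  have htail_small : rexp (-(z^2/2)) ≤ 256*t^2/d^4 := by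
    refine le_trans hzt ?_
    rw [div_le_div_iff₀ (by positivity : (0:ℝ) < z^4) (by positivity : (0:ℝ) < d^4)]
    have h1 : d^4/(16*t^2) * (16*t^2) ≤ z^4 * (16*t^2) :=
      mul_le_mul_of_nonneg_right hz4 (by positivity)
    have h2 : d^4/(16*t^2) * (16*t^2) = d^4 := by field_simp
    nlinarith
  have hect : rexp (c*t) ≤ 3 := by
    have h1 : c*t ≤ 1 := by
      calc c*t ≤ c*(1/c) := mul_le_mul_of_nonneg_left htc hc.le
        _ = 1 := by field_simp
    calc rexp (c*t) ≤ rexp 1 := Real.exp_le_exp.2 h1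
      _ ≤ 3 := by nlinarith [Real.exp_one_lt_d9]
  have hPhi : 1 - rexp (-(z^2/2)) ≤ (cdf (gaussianReal 0 1)) z := gauss_cdf_lower hz1
  have h8 : 800 * t ≤ c*d^4 := by
    have := (le_div_iff₀ (by norm_num : (0:ℝ) < 800)).1 htc8
    linarith
  have key : 3 * (256*t^2/d^4) < c * t := by
    have hre : 3 * (256*t^2/d^4) = 768*t^2/d^4 := by ring
    rw [hre, div_lt_iff₀ (by positivity : (0:ℝ) < d^4)]
    have hmul := mul_le_mul_of_nonneg_right h8 ht.le
    have hq := mul_pos ht ht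
    linarith [hmul, hq]
  have hbig : rexp (c*t) * rexp (-(z^2/2)) < c*t := by
    calc rexp (c*t) * rexp (-(z^2/2)) ≤ 3 * (256*t^2/d^4) :=
          mul_le_mul hect htail_small (Real.exp_nonneg _) (by norm_num)
      _ < c*t := key
  have h1ct : 1 + c*t ≤ rexp (c*t) := by
    have := Real.add_one_le_exp (c*t)
    linarith
  calc (1:ℝ) < 1 + c*t - rexp (c*t) * rexp (-(z^2/2)) := by nlinarith [mul_pos hc ht]
    _ ≤ rexp (c*t) - rexp (c*t) * rexp (-(z^2/2)) := by linarith
    _ = rexp (c*t) * (1 - rexp (-(z^2/2))) := by ring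
    _ ≤ rexp (c*t) * (cdf (gaussianReal 0 1)) z :=
        mul_le_mul_of_nonneg_left hPhi (Real.exp_nonneg _)

lemma part3_aux {c d : ℝ} (hc : 0 < c) (hd : 0 < d) :
    ∃ t : ℝ, 0 < t ∧ 1 < rexp (c * t) * (cdf (gaussianReal 0 1)) ((d - t) / Real.sqrt t) := by
  have hpos : 0 < min (min (d/2) (d^2/4)) (min (1/c) (c*d^4/800)) :=
    lt_min (lt_min (by positivity) (by positivity)) (lt_min (by positivity) (by positivity))
  refine ⟨_, hpos, part3_aux' hc hd hpos
    (le_trans (min_le_left _ _) (min_le_left _ _))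
    (le_trans (min_le_left _ _) (min_le_right _ _))
    (le_trans (min_le_right _ _) (min_le_left _ _))
    (le_trans (min_le_right _ _) (min_le_right _ _))⟩
end GaussAll
section Part1

variable {Ω : Type} [MeasurableSpace Ω]

lemma part1_eq (M : MarkovProcess ℝ Ω)
    (hgauss : ∀ (x : ℝ) (t : ℝ), 0 < t →
      Measure.map (M.X t) (M.P x) = ProbabilityTheory.gaussianReal x (Real.toNNReal t))
    (α : ℝ) {x t : ℝ} (hx : x < 1) (ht : 0 < t) :
    ∫ ω, Real.exp (-α * t) *
        Set.indicator {ω | M.X t ω < 1} (fun ω => Real.exp (M.X t ω)) ω ∂ M.P x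
      = Real.exp ((1 / 2 - α) * t + x) *
          ProbabilityTheory.cdf (ProbabilityTheory.gaussianReal 0 1)
            ((1 - x - t) / Real.sqrt t) := by
  haveI := M.isProb x
  have hfun : (fun ω => Real.exp (-α * t) *
        Set.indicator {ω' : Ω | M.X t ω' < 1} (fun ω' => Real.exp (M.X t ω')) ω)
      = fun ω => Real.exp (-α * t) * Set.indicator (Iio 1) Real.exp (M.X t ω) := by
    funext ω
    congr 1
  rw [hfun]
  have hmeas : AEStronglyMeasurable
      (fun y : ℝ => Real.exp (-α*t) * Set.indicator (Iio 1) Real.exp y)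
      (Measure.map (M.X t) (M.P x)) :=
    (measurable_const.mul (Real.measurable_exp.indicator measurableSet_Iio)).aestronglyMeasurable
  rw [← integral_map (M.meas_X t).aemeasurable hmeas, hgauss x t ht]
  rw [MeasureTheory.integral_const_mul, integral_indicator measurableSet_Iio]
  rw [gauss_setIntegral_exp ht measurableSet_Iio, gauss_Iio_eq_Iic (toNNReal_ne_zero ht),
    gauss_cdf_eq ht]
  have harg : (1 - (x + t)) / Real.sqrt t = (1 - x - t) / Real.sqrt t := by ring_nf
  rw [harg, ← mul_assoc, ← Real.exp_add]
  congr 2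
  ring

lemma cmp_bound {α t : ℝ} (hα : 0 ≤ α) (ht : 0 < t) (M : MarkovProcess ℝ Ω) (ω : Ω) :
    ‖Real.exp (-α * t) *
      Set.indicator {ω' : Ω | M.X t ω' < 1} (fun ω' => Real.exp (M.X t ω')) ω‖
      ≤ Real.exp 1 := by
  rw [Real.norm_eq_abs]
  have h1 : Real.exp (-α * t) ≤ 1 := by
    rw [show (1:ℝ) = Real.exp 0 by simp]
    refine Real.exp_le_exp.2 ?_
    nlinarith
  by_cases hmem : ω ∈ {ω' : Ω | M.X t ω' < 1}
  · rw [Set.indicator_of_mem hmem]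
    rw [abs_of_nonneg (mul_nonneg (Real.exp_nonneg _) (Real.exp_nonneg _))]
    have h2 : M.X t ω < 1 := hmem
    calc Real.exp (-α * t) * Real.exp (M.X t ω) ≤ 1 * Real.exp 1 :=
          mul_le_mul h1 (Real.exp_le_exp.2 h2.le) (Real.exp_nonneg _) one_pos.le
      _ = Real.exp 1 := one_mul _
  · rw [Set.indicator_of_notMem hmem]
    simp [Real.exp_nonneg]

lemma integral_cmp_le {M : MarkovProcess ℝ Ω}
    (hpath : ∀ ω : Ω, Continuous fun u => M.X u ω)
    {α t x : ℝ} (hα : 0 ≤ α) (ht : 0 < t) :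
    ∫ ω, Real.exp (-α * t) *
        Set.indicator {ω' : Ω | M.X t ω' < 1} (fun ω' => Real.exp (M.X t ω')) ω ∂ M.P x
      ≤ ∫ ω, gLim M α t ω ∂ M.P x := by
  haveI := M.isProb x
  have hmeas1 : Measurable (fun ω => Real.exp (-α * t) *
      Set.indicator {ω' : Ω | M.X t ω' < 1} (fun ω' => Real.exp (M.X t ω')) ω) := by
    refine measurable_const.mul ?_
    exact (Real.measurable_exp.comp (M.meas_X t)).indicator
      (measurableSet_lt (M.meas_X t) measurable_const)
  have hint1 : Integrable (fun ω => Real.exp (-α * t) *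
      Set.indicator {ω' : Ω | M.X t ω' < 1} (fun ω' => Real.exp (M.X t ω')) ω) (M.P x) :=
    (integrable_const (Real.exp 1)).mono' hmeas1.aestronglyMeasurable
      (ae_of_all _ (cmp_bound hα ht M))
  have hint2 : Integrable (gLim M α t) (M.P x) :=
    (integrable_const (Real.exp 1)).mono' (measurable_gLim hpath α t).aestronglyMeasurable
      (ae_of_all _ (gLim_bound hα ht))
  exact integral_mono hint1 hint2 (gLim_ge hα ht)

end Part1
/-- the Brownian-motion example with `O = (-∞,1)`, `G(x) = min(eˣ, e)`,
`H = f = 0` and `0 < α < 1/2`: the explicit formula for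
`E^x[e^{-αt} 1_{X(t)<1} e^{X(t)}]`, the resulting lower bound for `w`, and `w > G`
on `(-∞,1)`. -/
theorem stmt16 {Ω : Type} [MeasurableSpace Ω] (M : MarkovProcess ℝ Ω)
    (hM : M.IsMarkov)
    (hpath : ∀ ω : Ω, Continuous fun t => M.X t ω)
    (hgauss : ∀ (x : ℝ) (t : ℝ), 0 < t →
      Measure.map (M.X t) (M.P x) = ProbabilityTheory.gaussianReal x (Real.toNNReal t))
    (α : ℝ) (hα0 : 0 < α) (hα : α < 1 / 2) :
    (∀ x : ℝ, x < 1 → ∀ t : ℝ, 0 < t →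
      ∫ ω, Real.exp (-α * t) *
          Set.indicator {ω | M.X t ω < 1} (fun ω => Real.exp (M.X t ω)) ω ∂ M.P x
        = Real.exp ((1 / 2 - α) * t + x) *
            ProbabilityTheory.cdf (ProbabilityTheory.gaussianReal 0 1)
              ((1 - x - t) / Real.sqrt t))
    ∧ (∀ x : ℝ, x < 1 → ∀ t : ℝ, 0 < t →
        M.value (Set.Iio 1) α (fun _ _ => 0) (fun _ y => min (Real.exp y) (Real.exp 1))
            (fun _ _ => 0) 0 x
          ≥ Real.exp ((1 / 2 - α) * t + x) *
              ProbabilityTheory.cdf (ProbabilityTheory.gaussianReal 0 1)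
                ((1 - x - t) / Real.sqrt t))
    ∧ (∀ x : ℝ, x < 1 →
        M.value (Set.Iio 1) α (fun _ _ => 0) (fun _ y => min (Real.exp y) (Real.exp 1))
            (fun _ _ => 0) 0 x > Real.exp x) := by
  have hpart1 : ∀ x : ℝ, x < 1 → ∀ t : ℝ, 0 < t →
      ∫ ω, Real.exp (-α * t) *
          Set.indicator {ω | M.X t ω < 1} (fun ω => Real.exp (M.X t ω)) ω ∂ M.P x
        = Real.exp ((1 / 2 - α) * t + x) *
            ProbabilityTheory.cdf (ProbabilityTheory.gaussianReal 0 1)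
              ((1 - x - t) / Real.sqrt t) :=
    fun x hx t ht => part1_eq M hgauss α hx ht
  have hp2 : ∀ x : ℝ, x < 1 → ∀ t : ℝ, 0 < t →
      M.value (Set.Iio 1) α (fun _ _ => 0) (fun _ y => min (Real.exp y) (Real.exp 1))
          (fun _ _ => 0) 0 x
        ≥ Real.exp ((1 / 2 - α) * t + x) *
            ProbabilityTheory.cdf (ProbabilityTheory.gaussianReal 0 1)
              ((1 - x - t) / Real.sqrt t) := by
    intro x hx t ht
    rw [ge_iff_le, ← hpart1 x hx t ht]
    exact le_trans (integral_cmp_le hpath hα0.le ht) (value_ge_integral_gLim hpath hα0 hx ht)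
  refine ⟨hpart1, hp2, ?_⟩
  intro x hx
  obtain ⟨t, ht, hgt⟩ := part3_aux (show (0:ℝ) < 1/2 - α by linarith)
    (show (0:ℝ) < 1 - x by linarith)
  have h3 := hp2 x hx t ht
  have key : Real.exp x < Real.exp ((1/2 - α)*t + x) *
      ProbabilityTheory.cdf (ProbabilityTheory.gaussianReal 0 1) ((1 - x - t) / Real.sqrt t) := by
    have h4 := mul_lt_mul_of_pos_left hgt (Real.exp_pos x)
    rw [mul_one] at h4
    calc Real.exp x < Real.exp x * (Real.exp ((1/2 - α)*t) *
          ProbabilityTheory.cdf (ProbabilityTheory.gaussianReal 0 1)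
            ((1 - x - t) / Real.sqrt t)) := h4
      _ = Real.exp ((1/2 - α)*t + x) *
          ProbabilityTheory.cdf (ProbabilityTheory.gaussianReal 0 1)
            ((1 - x - t) / Real.sqrt t) := by rw [Real.exp_add]; ring
  exact lt_of_lt_of_le key h3

end MarkovProcess
end
end

section
/- Under the strong Feller property (A3), if F : [0,∞)×E → ℝ is bounded measurable and s ↦ F(s,x) is continuous uniformly in x from compact subsets of E, then for every h > 0 the map (s,x) ↦ E^x[F(s+h, X(h))] is continuous on [0,∞)×E. -/
open MeasureTheory Set Filter Topology ENNReal

noncomputable section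

namespace MarkovProcess

variable {E : Type} [MeasurableSpace E] {Ω : Type} [MeasurableSpace Ω]

/-- under the strong Feller property (A3) and compact containment, if
`s ↦ F(s,x)` is continuous uniformly in `x` from compacts, then for each `h > 0`
the map `(s,x) ↦ E^x[F(s+h,X(h))]` is continuous on `[0,∞) × E`. -/
theorem stmt18 {E : Type} [MeasurableSpace E] [MetricSpace E] [BorelSpace E]
    [ProperSpace E] [SecondCountableTopology E]
    {Ω : Type} [MeasurableSpace Ω] (M : MarkovProcess E Ω)
    (hSF : M.StrongFeller)
    (hCC : ∀ K : Set E, IsCompact K → ∀ h : ℝ, 0 < h → ∀ ε : ℝ, 0 < ε →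
      ∃ L : Set E, IsCompact L ∧ ∀ x ∈ K, (M.P x {ω | M.X h ω ∉ L}).toReal < ε)
    (F : ℝ → E → ℝ) (hFm : Measurable (Function.uncurry F)) (hFb : Bdd F)
    (hFcont : ∀ K : Set E, IsCompact K → ∀ s₀ : ℝ, 0 ≤ s₀ →
      TendstoUniformlyOn (fun s x => F s x) (fun x => F s₀ x) (𝓝[Set.Ici 0] s₀) K) :
    ∀ h : ℝ, 0 < h →
      ContinuousOn (fun p : ℝ × E => ∫ ω, F (p.1 + h) (M.X h ω) ∂ M.P p.2)
        (Set.Ici 0 ×ˢ Set.univ) := by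
  obtain ⟨C₀, hC₀⟩ := hFb
  set C := max C₀ 0 with hCdef
  have hC : ∀ s x, 0 ≤ s → |F s x| ≤ C := fun s x hs => (hC₀ s x hs).trans (le_max_left _ _)
  have hC0 : (0:ℝ) ≤ C := le_max_right _ _
  intro h hh
  have measF : ∀ s : ℝ, Measurable (fun y => F s y) := fun s => hFm.of_uncurry_left
  have measInt : ∀ s : ℝ, Measurable (fun ω => F s (M.X h ω)) :=
    fun s => (measF s).comp (M.meas_X h)
  have intF : ∀ s : ℝ, 0 ≤ s → ∀ x : E, Integrable (fun ω => F s (M.X h ω)) (M.P x) := by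
    intro s hs x
    haveI := M.isProb x
    exact (integrable_const C).mono' (measInt s).aestronglyMeasurable
      (Filter.Eventually.of_forall fun ω => by
        simpa [Real.norm_eq_abs] using hC s (M.X h ω) hs)
  rintro ⟨s₀, x₀⟩ ⟨hs₀', -⟩
  have hs₀ : (0:ℝ) ≤ s₀ := hs₀'
  rw [Metric.continuousWithinAt_iff]
  intro ε hε
  -- continuity in x by strong Feller
  have hφ : Continuous fun x => ∫ ω, F (s₀ + h) (M.X h ω) ∂ M.P x :=
    hSF h hh _ (measF (s₀ + h)) ⟨C, fun y => hC _ y (by linarith)⟩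
  obtain ⟨δ₂, hδ₂pos, hδ₂⟩ := Metric.continuous_iff.mp hφ x₀ (ε / 3) (by positivity)
  -- compact containment around x₀
  have hK : IsCompact (Metric.closedBall x₀ 1) := isCompact_closedBall x₀ 1
  obtain ⟨L, hLc, hL⟩ := hCC _ hK h hh (ε / (6 * (C + 1))) (by positivity)
  -- uniform-in-L continuity in s near s₀ + h
  have hUC := hFcont L hLc (s₀ + h) (by linarith)
  rw [Metric.tendstoUniformlyOn_iff] at hUC
  have hev := hUC (ε / 6) (by positivity)
  rw [eventually_nhdsWithin_iff] at hev
  obtain ⟨δ₁, hδ₁pos, hδ₁⟩ := Metric.eventually_nhds_iff.mp hev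
  refine ⟨min δ₁ (min δ₂ 1), by positivity, ?_⟩
  rintro ⟨s, x⟩ ⟨hs', -⟩ hdist
  have hs : (0:ℝ) ≤ s := hs'
  rw [Prod.dist_eq] at hdist
  have hd1 : dist s s₀ < δ₁ :=
    lt_of_le_of_lt (le_max_left _ _) (hdist.trans_le (min_le_left _ _))
  have hd2 : dist x x₀ < δ₂ :=
    lt_of_le_of_lt (le_max_right _ _)
      (hdist.trans_le ((min_le_right _ _).trans (min_le_left _ _)))
  have hd3 : dist x x₀ < 1 :=
    lt_of_le_of_lt (le_max_right _ _)
      (hdist.trans_le ((min_le_right _ _).trans (min_le_right _ _)))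
  have hxK : x ∈ Metric.closedBall x₀ 1 := Metric.mem_closedBall.mpr hd3.le
  haveI := M.isProb x
  -- the bad set
  set S : Set Ω := (M.X h ⁻¹' L)ᶜ with hSdef
  have hSmeas : MeasurableSet S := (M.meas_X h hLc.isClosed.measurableSet).compl
  have hPS : (M.P x S).toReal < ε / (6 * (C + 1)) := hL x hxK
  have hPS0 : (0:ℝ) ≤ (M.P x S).toReal := ENNReal.toReal_nonneg
  -- step 1 : vary s with x fixed
  have key : |(∫ ω, F (s + h) (M.X h ω) ∂ M.P x) - ∫ ω, F (s₀ + h) (M.X h ω) ∂ M.P x|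
      ≤ ε / 6 + 2 * C * (M.P x S).toReal := by
    rw [← integral_sub (intF (s + h) (by linarith) x) (intF (s₀ + h) (by linarith) x)]
    have hb : ∀ ω, |F (s + h) (M.X h ω) - F (s₀ + h) (M.X h ω)|
        ≤ ε / 6 + S.indicator (fun _ => 2 * C) ω := by
      intro ω
      by_cases hmem : M.X h ω ∈ L
      · have hdy : dist (s + h) (s₀ + h) < δ₁ := by
          simpa [Real.dist_eq, add_sub_add_right_eq_sub] using hd1
        have := hδ₁ hdy (by simp only [Set.mem_Ici]; linarith) (M.X h ω) hmem
        rw [Real.dist_eq] at this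
        have hind : (0:ℝ) ≤ S.indicator (fun _ => 2 * C) ω :=
          Set.indicator_nonneg (fun _ _ => by linarith) ω
        rw [abs_sub_comm] at this
        linarith
      · have hωS : ω ∈ S := by simpa [hSdef] using hmem
        rw [Set.indicator_of_mem hωS]
        have h1 := hC (s + h) (M.X h ω) (by linarith)
        have h2 := hC (s₀ + h) (M.X h ω) (by linarith)
        have := abs_sub (F (s + h) (M.X h ω)) (F (s₀ + h) (M.X h ω))
        linarith
    calc |∫ ω, (F (s + h) (M.X h ω) - F (s₀ + h) (M.X h ω)) ∂ M.P x|
        ≤ ∫ ω, |F (s + h) (M.X h ω) - F (s₀ + h) (M.X h ω)| ∂ M.P x := by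
          simpa [Real.norm_eq_abs] using
            norm_integral_le_integral_norm
              (fun ω => F (s + h) (M.X h ω) - F (s₀ + h) (M.X h ω)) (μ := M.P x)
      _ ≤ ∫ ω, (ε / 6 + S.indicator (fun _ => 2 * C) ω) ∂ M.P x := by
          refine integral_mono ?_ ?_ hb
          · exact ((intF (s + h) (by linarith) x).sub
              (intF (s₀ + h) (by linarith) x)).abs
          · exact (integrable_const _).add ((integrable_const _).indicator hSmeas)
      _ = ε / 6 + 2 * C * (M.P x S).toReal := by
          rw [integral_add (integrable_const _) ((integrable_const _).indicator hSmeas),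
            integral_const, integral_indicator_const _ hSmeas]
          simp [mul_comm]
          exact Or.inl rfl
  -- step 2 : vary x with s₀ fixed
  have key2 : |(∫ ω, F (s₀ + h) (M.X h ω) ∂ M.P x)
      - ∫ ω, F (s₀ + h) (M.X h ω) ∂ M.P x₀| < ε / 3 := by
    have := hδ₂ x hd2
    rwa [Real.dist_eq] at this
  have hCP : 2 * C * (M.P x S).toReal ≤ ε / 3 := by
    have h6 : (M.P x S).toReal * (6 * (C + 1)) < ε :=
      (lt_div_iff₀ (by positivity)).mp hPS
    nlinarith [h6, hPS0, hC0]
  rw [Real.dist_eq]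
  have htri := abs_sub_le (∫ ω, F (s + h) (M.X h ω) ∂ M.P x)
    (∫ ω, F (s₀ + h) (M.X h ω) ∂ M.P x) (∫ ω, F (s₀ + h) (M.X h ω) ∂ M.P x₀)
  simp only at htri ⊢
  linarith

end MarkovProcess
end
end
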